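/- Let Y and Z be real Hilbert spaces and K : Y × Z → ℝ a function such that K(·,z) is convex and lower semicontinuous for every z ∈ Z, and K(y,·) is concave and upper semicontinuous for every y ∈ Y. Then the associated operator T on the Hilbert space Y × Z is maximal monotone. -/

import Mathlib

open scoped InnerProductSpace

/-- The Arrow–Hurwicz operator `T` associated to a convex–concave function `K`:
`(y*, z*) ∈ T (y, z)` iff `y*` is a subgradient of `K(·,z)` at `y` and
`z*` is a subgradient of `-K(y,·)` at `z`. -/
def SaddleOperator {Y Z : Type*} [NormedAddCommGroup Y] [InnerProductSpace ℝ Y]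
    [NormedAddCommGroup Z] [InnerProductSpace ℝ Z]
    (K : Y → Z → ℝ) (p : Y × Z) : Set (Y × Z) :=
  {q : Y × Z |
    (∀ w : Y, K p.1 p.2 + ⟪q.1, w - p.1⟫_ℝ ≤ K w p.2) ∧
    (∀ w : Z, -K p.1 p.2 + ⟪q.2, w - p.2⟫_ℝ ≤ -K p.1 w)}

/-- A multivalued operator on the Hilbert space `Y × Z` (with the product inner
product) is monotone if `⟪q₁ - q₂, p₁ - p₂⟫ ≥ 0` whenever `q₁ ∈ A p₁`, `q₂ ∈ A p₂`. -/
def IsMonotoneOperatorProd {Y Z : Type*} [NormedAddCommGroup Y] [InnerProductSpace ℝ Y]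
    [NormedAddCommGroup Z] [InnerProductSpace ℝ Z]
    (A : Y × Z → Set (Y × Z)) : Prop :=
  ∀ p₁ p₂ q₁ q₂, q₁ ∈ A p₁ → q₂ ∈ A p₂ →
    0 ≤ ⟪q₁.1 - q₂.1, p₁.1 - p₂.1⟫_ℝ + ⟪q₁.2 - q₂.2, p₁.2 - p₂.2⟫_ℝ

/-- A monotone operator on `Y × Z` is maximal monotone if its graph is not properly
contained in the graph of any other monotone operator. -/
def IsMaximalMonotoneOperatorProd {Y Z : Type*}
    [NormedAddCommGroup Y] [InnerProductSpace ℝ Y]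
    [NormedAddCommGroup Z] [InnerProductSpace ℝ Z]
    (A : Y × Z → Set (Y × Z)) : Prop :=
  IsMonotoneOperatorProd A ∧
    ∀ B : Y × Z → Set (Y × Z), IsMonotoneOperatorProd B → (∀ p, A p ⊆ B p) → B = A


open Set Metric Filter

section Helpers

variable {E : Type*} [NormedAddCommGroup E] [InnerProductSpace ℝ E]

private lemma quad_id (x y v : E) {a b : ℝ} (ha : 0 ≤ a) (hb : 0 ≤ b) (hab : a + b = 1) :
    ‖a•x + b•y - v‖^2 = a*‖x-v‖^2 + b*‖y-v‖^2 - a*b*‖x-y‖^2 := by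
  have hcomb : a•x + b•y - v = a•(x-v) + b•(y-v) := by
    have h : a•(x-v) + b•(y-v) = a•x + b•y - (a+b)•v := by module
    rw [h, hab, one_smul]
  rw [hcomb]
  have e1 : ‖a•(x-v) + b•(y-v)‖^2
      = a^2*‖x-v‖^2 + 2*(a*b)*⟪x-v, y-v⟫_ℝ + b^2*‖y-v‖^2 := by
    rw [norm_add_sq_real, norm_smul, norm_smul, real_inner_smul_left, real_inner_smul_right]
    simp [abs_of_nonneg ha, abs_of_nonneg hb]
    ring
  have e2 : ‖x-y‖^2 = ‖x-v‖^2 - 2*⟪x-v, y-v⟫_ℝ + ‖y-v‖^2 := by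
    have h : x - y = (x-v) - (y-v) := by abel
    rw [h, norm_sub_sq_real]
  rw [e1, e2]
  linear_combination (‖x-v‖^2*a + ‖y-v‖^2*b) * hab

end Helpers

section SC
variable {X : Type*} [NormedAddCommGroup X] [NormedSpace ℝ X]

/-- strong convexity with modulus 1, in inequality form -/
def StrongCvx (h : X → ℝ) : Prop :=
  ∀ x y : X, ∀ a b : ℝ, 0 ≤ a → 0 ≤ b → a + b = 1 →
    h (a•x + b•y) + (a*b/2) * ‖x-y‖^2 ≤ a * h x + b * h y

lemma lsc_add_cont (f g : X → ℝ) (hf : LowerSemicontinuous f) (hg : Continuous g) :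
    LowerSemicontinuous (fun x => f x + g x) := by
  intro x c hc
  have hc' : c < f x + g x := hc
  have hδ : (0:ℝ) < (f x + g x - c)/2 := by linarith
  have h1 : ∀ᶠ y in nhds x, f x - (f x + g x - c)/2 < f y := hf x _ (by linarith)
  have h2 : ∀ᶠ y in nhds x, g x - (f x + g x - c)/2 < g y :=
    (hg.tendsto x).eventually (eventually_gt_nhds (by linarith))
  filter_upwards [h1, h2] with y hy1 hy2
  linarith


private lemma arith1 (L U r' s c d hy : ℝ) (hr'0 : 0 < r')
    (hs : r' * s = U - L + r'^2/2) (hc : c = U - s^2/2)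
    (key2 : L*d + (r'*d*(d-r'))/2 ≤ (d-r')*U + r'*hy) : c ≤ hy := by
  have hsd : d*(r'*s) = d*(U - L + r'^2/2) := by rw [hs]
  have hfin : r'*c ≤ r'*hy := by
    nlinarith [mul_nonneg hr'0.le (sq_nonneg (d - s)), hsd, key2]
  exact le_of_mul_le_mul_left (by linarith) hr'0

lemma exists_min [CompleteSpace X] (h : X → ℝ) (hsc : StrongCvx h)
    (hlsc : LowerSemicontinuous h) :
    ∃ x₀ : X, ∀ x, h x₀ + ‖x - x₀‖^2/4 ≤ h x := by
  -- midpoint inequality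
  have hmid : ∀ x y : X, h ((1/2:ℝ)•x + (1/2:ℝ)•y) + ‖x-y‖^2/8 ≤ h x/2 + h y/2 := by
    intro x y
    have := hsc x y (1/2) (1/2) (by norm_num) (by norm_num) (by norm_num)
    linarith
  -- Baire: h is bounded above on some ball
  obtain ⟨n, x₀, hx₀⟩ : ∃ (n : ℕ) (x₀ : X), x₀ ∈ interior {x | h x ≤ n} := by
    have hc : ∀ n : ℕ, IsClosed {x : X | h x ≤ (n:ℝ)} := fun n => hlsc.isClosed_preimage _
    have hU : (⋃ n : ℕ, {x : X | h x ≤ (n:ℝ)}) = univ := by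
      apply eq_univ_of_forall
      intro x
      exact mem_iUnion.2 ⟨⌈h x⌉₊, by simpa using Nat.le_ceil (h x)⟩
    obtain ⟨n, hn⟩ := nonempty_interior_of_iUnion_of_closed hc hU
    exact ⟨n, hn.choose, hn.choose_spec⟩
  obtain ⟨r, hr0, hball⟩ : ∃ r > 0, ball x₀ r ⊆ {x | h x ≤ (n:ℝ)} :=
    Metric.mem_nhds_iff.1 (mem_interior_iff_mem_nhds.1 hx₀)
  set U : ℝ := (n:ℝ) with hU
  clear_value U
  have hx₀U : h x₀ ≤ U := hball (mem_ball_self hr0)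
  -- lower bound on the ball by reflection
  have hlow : ∀ w ∈ ball x₀ r, 2*h x₀ - U ≤ h w := by
    intro w hw
    have hw' : (2:ℝ)•x₀ - w ∈ ball x₀ r := by
      rw [mem_ball, dist_eq_norm] at hw ⊢
      have : (2:ℝ)•x₀ - w - x₀ = -(w - x₀) := by module
      rw [this, norm_neg]; exact hw
    have hmem : (1/2:ℝ)•w + (1/2:ℝ)•((2:ℝ)•x₀ - w) = x₀ := by module
    have h1 := hmid w ((2:ℝ)•x₀ - w)
    rw [hmem] at h1
    have hn8 : (0:ℝ) ≤ ‖w - ((2:ℝ)•x₀ - w)‖^2/8 := by positivity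
    have h3 : h ((2:ℝ)•x₀ - w) ≤ U := hball hw'
    linarith
  -- global lower bound
  set r' : ℝ := r/2 with hr'
  have hr'0 : 0 < r' := by positivity
  have hr'r : r' < r := by rw [hr']; linarith
  clear_value r'
  set L : ℝ := 2*h x₀ - U with hL
  clear_value L
  have hLU : L ≤ U := by
    have := hlow x₀ (mem_ball_self hr0); linarith
  set s : ℝ := (U - L)/r' + r'/2 with hs_def
  have hs : r' * s = (U - L) + r'^2/2 := by rw [hs_def]; field_simp
  clear_value s
  set c : ℝ := U - s^2/2 with hc_def
  clear_value c
  have hglb : ∀ y, c ≤ h y := by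
    intro y
    set d : ℝ := ‖y - x₀‖ with hd_def
    have hd0 : 0 ≤ d := by rw [hd_def]; positivity
    by_cases hcase : d < r
    · -- in the ball
      have : L ≤ h y := hlow y (by rw [mem_ball, dist_eq_norm]; exact hcase)
      -- c ≤ L
      nlinarith [sq_nonneg (s - r'), hs, this]
    · push_neg at hcase
      have hdr' : r' < d := by linarith
      have hdpos : 0 < d := lt_trans hr'0 hdr'
      set t : ℝ := r'/d with ht_def
      have ht0 : 0 < t := by positivity
      have htd : t * d = r' := by rw [ht_def]; field_simp
      have ht1 : t < 1 := by rw [ht_def, div_lt_one hdpos]; exact hdr'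
      clear_value t
      set w : X := (1-t)•x₀ + t•y with hw_def
      have hwball : w ∈ ball x₀ r := by
        rw [mem_ball, dist_eq_norm]
        have : w - x₀ = t•(y - x₀) := by rw [hw_def]; module
        rw [this, norm_smul, Real.norm_eq_abs, abs_of_nonneg ht0.le, ← hd_def]
        rw [htd]; exact hr'r
      have hmaster := hsc x₀ y (1-t) t (by linarith) ht0.le (by ring)
      have hnorm : ‖x₀ - y‖ = d := by rw [hd_def, norm_sub_rev]
      rw [hnorm, ← hw_def] at hmaster
      clear_value d
      have hwL : L ≤ h w := hlow w hwball
      have key : L + ((1-t)*t/2)*d^2 ≤ (1-t)*U + t*h y := by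
        have h1 : (1-t)*h x₀ ≤ (1-t)*U := by
          apply mul_le_mul_of_nonneg_left hx₀U; linarith
        linarith
      -- multiply by d
      have keyd : L*d + (((1-t)*t/2)*d^2)*d ≤ ((1-t)*U)*d + (t*h y)*d := by
        nlinarith [mul_le_mul_of_nonneg_right key hd0]
      have eL : (((1-t)*t/2)*d^2)*d = (r'*d*(d-r'))/2 := by
        linear_combination ((d^2 - t*d*d - r'*d)/2) * htd
      have eU : ((1-t)*U)*d = (d-r')*U + 0 := by linear_combination (-U) * htd
      have eH : (t*h y)*d = r'*h y := by linear_combination (h y) * htd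
      have key2 : L*d + (r'*d*(d-r'))/2 ≤ (d-r')*U + r'*h y := by linarith
      exact arith1 L U r' s c d (h y) hr'0 hs hc_def key2
  -- infimum and minimizing sequence
  have hbdd : BddBelow (Set.range h) := ⟨c, by rintro _ ⟨x, rfl⟩; exact hglb x⟩
  have hne : (Set.range h).Nonempty := ⟨h x₀, ⟨x₀, rfl⟩⟩
  set m : ℝ := sInf (Set.range h) with hm
  have hm_le : ∀ x, m ≤ h x := fun x => csInf_le hbdd ⟨x, rfl⟩
  have hseq : ∀ k : ℕ, ∃ x, h x < m + 1/(k+1) := by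
    intro k
    have h0 : (0:ℝ) < 1/((k:ℝ)+1) := by positivity
    have : m < m + 1/(k+1) := by linarith
    obtain ⟨_, ⟨x, rfl⟩, hx⟩ := exists_lt_of_csInf_lt hne this
    exact ⟨x, hx⟩
  choose u hu using hseq
  have hdist : ∀ (j k N : ℕ), N ≤ j → N ≤ k →
      dist (u j) (u k) ≤ Real.sqrt (8/(N+1)) := by
    intro j k N hNj hNk
    have h1 : m ≤ h ((1/2:ℝ)•(u j) + (1/2:ℝ)•(u k)) := hm_le _
    have h2 := hmid (u j) (u k)
    have h3 : h (u j) < m + 1/(j+1) := hu j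
    have h4 : h (u k) < m + 1/(k+1) := hu k
    have hj : 1/((j:ℝ)+1) ≤ 1/((N:ℝ)+1) := by
      apply one_div_le_one_div_of_le (by positivity)
      exact_mod_cast by omega
    have hk : 1/((k:ℝ)+1) ≤ 1/((N:ℝ)+1) := by
      apply one_div_le_one_div_of_le (by positivity)
      exact_mod_cast by omega
    have hsq : ‖u j - u k‖^2 ≤ 8/(N+1) := by
      have h5 : ‖u j - u k‖^2/8 ≤ 1/((N:ℝ)+1) := by linarith
      have e : (8:ℝ)/((N:ℝ)+1) = 8*(1/((N:ℝ)+1)) := by ring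
      rw [e]; linarith
    rw [dist_eq_norm]
    exact Real.le_sqrt_of_sq_le hsq
  have hb0 : Tendsto (fun N : ℕ => Real.sqrt (8/(N+1))) atTop (nhds 0) := by
    have h1 : Tendsto (fun N : ℕ => (8:ℝ)/((N:ℝ)+1)) atTop (nhds 0) := by
      have := tendsto_one_div_add_atTop_nhds_zero_nat.const_mul (8:ℝ)
      simpa [div_eq_mul_inv, mul_comm] using this
    have h2 := (Real.continuous_sqrt.tendsto 0).comp h1
    rw [Real.sqrt_zero] at h2
    exact h2
  have hcauchy : CauchySeq u := cauchySeq_of_le_tendsto_0 _ hdist hb0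
  obtain ⟨xl, hxl⟩ := cauchySeq_tendsto_of_complete hcauchy
  have hxlm : h xl ≤ m := by
    by_contra hlt
    push_neg at hlt
    have hev1 : ∀ᶠ k in atTop, (m + h xl)/2 < h (u k) :=
      hxl.eventually (hlsc xl _ (by linarith))
    have hev2 : ∀ᶠ k : ℕ in atTop, 1/((k:ℝ)+1) < (h xl - m)/2 :=
      tendsto_one_div_add_atTop_nhds_zero_nat.eventually (eventually_lt_nhds (by linarith))
    obtain ⟨k, hk1, hk2⟩ := (hev1.and hev2).exists
    have := hu k
    linarith
  refine ⟨xl, fun x => ?_⟩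
  have h1 := hmid xl x
  have h2 : m ≤ h ((1/2:ℝ)•xl + (1/2:ℝ)•x) := hm_le _
  have h3 : ‖x - xl‖ = ‖xl - x‖ := norm_sub_rev _ _
  rw [h3]
  linarith
end SC


section IP
variable {E : Type*} [NormedAddCommGroup E] [InnerProductSpace ℝ E]

lemma strongCvx_of {f h : E → ℝ} (hf : ConvexOn ℝ Set.univ f) (c v : E) (C : ℝ)
    (hh : ∀ x, h x = f x + ⟪c, x⟫_ℝ + ‖x - v‖^2/2 + C) : StrongCvx h := by
  intro x y a b ha hb hab
  have hfi := hf.2 (Set.mem_univ x) (Set.mem_univ y) ha hb hab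
  simp only [smul_eq_mul] at hfi
  have hq := quad_id x y v ha hb hab
  have hin : ⟪c, a•x + b•y⟫_ℝ = a*⟪c,x⟫_ℝ + b*⟪c,y⟫_ℝ := by
    rw [inner_add_right, real_inner_smul_right, real_inner_smul_right]
  have hC : a*C + b*C = C := by rw [← add_mul, hab, one_mul]
  rw [hh, hh, hh, hin, hq]
  linarith

lemma subgrad_of_min {f : E → ℝ} (hf : ConvexOn ℝ Set.univ f) (p aa y₀ : E)
    (hmin : ∀ w, f y₀ - ⟪p, y₀⟫_ℝ + ‖y₀ - aa‖^2/2 ≤ f w - ⟪p, w⟫_ℝ + ‖w - aa‖^2/2) :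
    ∀ w, f y₀ + ⟪p - (y₀ - aa), w - y₀⟫_ℝ ≤ f w := by
  intro w
  set N : ℝ := ‖w - y₀‖^2 with hN
  have hN0 : 0 ≤ N := by rw [hN]; positivity
  have key : ∀ t : ℝ, 0 < t → t ≤ 1 →
      f y₀ + ⟪p - (y₀ - aa), w - y₀⟫_ℝ ≤ f w + (t/2)*N := by
    intro t ht0 ht1
    have hab : (1-t) + t = 1 := by ring
    have hconv := hf.2 (Set.mem_univ y₀) (Set.mem_univ w) (by linarith) ht0.le hab
    simp only [smul_eq_mul] at hconv
    have hq := quad_id y₀ w aa (by linarith : (0:ℝ) ≤ 1-t) ht0.le hab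
    rw [norm_sub_rev y₀ w] at hq
    have hmin' := hmin ((1-t)•y₀ + t•w)
    have hip : ⟪p, (1-t)•y₀ + t•w⟫_ℝ = (1-t)*⟪p,y₀⟫_ℝ + t*⟪p,w⟫_ℝ := by
      rw [inner_add_right, real_inner_smul_right, real_inner_smul_right]
    have hexp : ⟪p - (y₀ - aa), w - y₀⟫_ℝ
        = ⟪p,w⟫_ℝ - ⟪p,y₀⟫_ℝ - ⟪y₀ - aa, w - y₀⟫_ℝ := by
      rw [inner_sub_left, inner_sub_right]
    have hnorm : ‖w - aa‖^2 = N + 2*⟪y₀ - aa, w - y₀⟫_ℝ + ‖y₀ - aa‖^2 := by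
      have h : w - aa = (w - y₀) + (y₀ - aa) := by abel
      rw [h, norm_add_sq_real, real_inner_comm, hN]
    have master : f y₀ - ⟪p,y₀⟫_ℝ + ‖y₀-aa‖^2/2
        ≤ (1-t)*f y₀ + t*f w - ((1-t)*⟪p,y₀⟫_ℝ + t*⟪p,w⟫_ℝ)
          + ((1-t)*‖y₀-aa‖^2 + t*‖w-aa‖^2 - (1-t)*t*N)/2 := by
      rw [← hip, ← hq]
      calc f y₀ - ⟪p,y₀⟫_ℝ + ‖y₀-aa‖^2/2
          ≤ f ((1-t)•y₀ + t•w) - ⟪p, (1-t)•y₀ + t•w⟫_ℝ + ‖(1-t)•y₀ + t•w - aa‖^2/2 := hmin'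
        _ ≤ _ := by linarith
    have e2 : t*‖w - aa‖^2 = t*(N + 2*⟪y₀ - aa, w - y₀⟫_ℝ + ‖y₀ - aa‖^2) := by
      rw [hnorm]
    rw [hexp]
    nlinarith [master, e2, ht0]
  by_contra hgt
  push_neg at hgt
  set G : ℝ := f y₀ + ⟪p - (y₀ - aa), w - y₀⟫_ℝ - f w with hG
  have hG0 : 0 < G := by rw [hG]; linarith
  set t : ℝ := min 1 (G/(N+1)) with ht
  have ht0 : 0 < t := lt_min one_pos (by positivity)
  have ht1 : t ≤ 1 := min_le_left _ _
  have h1 := key t ht0 ht1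
  have h2 : t ≤ G/(N+1) := min_le_right _ _
  have h3 : (t/2)*N < G := by
    have h4 : t*N ≤ (G/(N+1))*N := mul_le_mul_of_nonneg_right h2 hN0
    have h5 : (G/(N+1))*N < G := by
      rw [div_mul_eq_mul_div, div_lt_iff₀ (by positivity)]
      nlinarith
    linarith
  rw [hG] at hG0
  linarith
end IP

lemma usc_neg_lsc {X : Type*} [TopologicalSpace X] {f : X → ℝ}
    (hf : UpperSemicontinuous f) : LowerSemicontinuous (fun x => -f x) := by
  intro x c hc
  have hc' : c < -f x := hc
  have : f x < -c := by linarith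
  filter_upwards [hf x _ this] with y hy
  linarith

set_option maxHeartbeats 1000000 in
lemma key_surj {Y Z : Type*} [NormedAddCommGroup Y] [InnerProductSpace ℝ Y] [CompleteSpace Y]
    [NormedAddCommGroup Z] [InnerProductSpace ℝ Z] [CompleteSpace Z]
    (K : Y → Z → ℝ)
    (hconv : ∀ z : Z, ConvexOn ℝ Set.univ (fun y => K y z))
    (hlsc : ∀ z : Z, LowerSemicontinuous (fun y => K y z))
    (hconc : ∀ y : Y, ConcaveOn ℝ Set.univ (fun z => K y z))
    (husc : ∀ y : Y, UpperSemicontinuous (fun z => K y z))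
    (a : Y) (b : Z) (as : Y) (bs : Z) :
    ∃ (y₀ : Y) (z₀ : Z),
      (as - (y₀ - a), bs - (z₀ - b)) ∈ SaddleOperator K (y₀, z₀) := by
  classical
  obtain ⟨Kp, hKp⟩ : ∃ Kp : Y → Z → ℝ, Kp = fun y z =>
      K y z - ⟪as, y⟫_ℝ + ⟪bs, z⟫_ℝ + ‖y - a‖^2/2 - ‖z - b‖^2/2 := ⟨_, rfl⟩
  -- strong convexity in y for each z
  have hSCy : ∀ z, StrongCvx (fun y => Kp y z) := by
    intro z
    apply strongCvx_of (hconv z) (-as) a (⟪bs, z⟫_ℝ - ‖z - b‖^2/2)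
    intro x
    simp only [hKp, inner_neg_left]
    ring
  -- strong convexity in z of -Kp y for each y
  have hSCz : ∀ y, StrongCvx (fun z => -Kp y z) := by
    intro y
    apply strongCvx_of (hconc y).neg (-bs) b (⟪as, y⟫_ℝ - ‖y - a‖^2/2)
    intro z
    simp only [hKp, inner_neg_left, Pi.neg_apply]
    ring
  -- lower semicontinuity
  have hlscy : ∀ z, LowerSemicontinuous (fun y => Kp y z) := by
    intro z
    have hi : Continuous (fun y : Y => ⟪as, y⟫_ℝ) := continuous_const.inner continuous_id
    have hn : Continuous (fun y : Y => ‖y - a‖^2) :=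
      ((continuous_id.sub continuous_const).norm.pow 2)
    have hcont : Continuous (fun y : Y => - ⟪as, y⟫_ℝ + ⟪bs, z⟫_ℝ + ‖y - a‖^2/2 - ‖z - b‖^2/2) :=
      ((hi.neg.add continuous_const).add (hn.div_const 2)).sub continuous_const
    have := lsc_add_cont _ _ (hlsc z) hcont
    convert this using 2 with y
    simp only [hKp]; ring
  have hlscz : ∀ y, LowerSemicontinuous (fun z => -Kp y z) := by
    intro y
    have husc' : LowerSemicontinuous (fun z => -K y z) := usc_neg_lsc (husc y)
    have hi : Continuous (fun z : Z => ⟪bs, z⟫_ℝ) := continuous_const.inner continuous_id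
    have hn : Continuous (fun z : Z => ‖z - b‖^2) :=
      ((continuous_id.sub continuous_const).norm.pow 2)
    have hcont : Continuous (fun z : Z => ⟪as, y⟫_ℝ - ⟪bs, z⟫_ℝ - ‖y - a‖^2/2 + ‖z - b‖^2/2) :=
      ((continuous_const.sub hi).sub continuous_const).add (hn.div_const 2)
    have := lsc_add_cont _ _ husc' hcont
    convert this using 2 with z
    simp only [hKp]; ring
  -- for each y, maximize Kp y · over z
  have hz : ∀ y : Y, ∃ z₀, ∀ z, Kp y z + ‖z - z₀‖^2/4 ≤ Kp y z₀ := by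
    intro y
    obtain ⟨z₀, hz₀⟩ := exists_min _ (hSCz y) (hlscz y)
    refine ⟨z₀, fun z => ?_⟩
    have h1 : -Kp y z₀ + ‖z - z₀‖^2/4 ≤ -Kp y z := hz₀ z
    linarith
  choose zc hzc using hz
  obtain ⟨φ, hφ⟩ : ∃ φ : Y → ℝ, φ = fun y => Kp y (zc y) := ⟨_, rfl⟩
  have hφsup : ∀ y z, Kp y z ≤ φ y := by
    intro y z
    have h1 := hzc y z
    have h0 : (0:ℝ) ≤ ‖z - zc y‖^2/4 := by positivity
    have h2 : φ y = Kp y (zc y) := by rw [hφ]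
    linarith
  have hSCφ : StrongCvx φ := by
    intro x y α β hα hβ hab
    have h1 := hSCy (zc (α•x + β•y)) x y α β hα hβ hab
    simp only [] at h1
    have h2 : α * Kp x (zc (α•x + β•y)) ≤ α * φ x :=
      mul_le_mul_of_nonneg_left (hφsup x _) hα
    have h3 : β * Kp y (zc (α•x + β•y)) ≤ β * φ y :=
      mul_le_mul_of_nonneg_left (hφsup y _) hβ
    have h4 : φ (α•x + β•y) = Kp (α•x + β•y) (zc (α•x + β•y)) := by rw [hφ]
    rw [h4]
    linarith
  have hlscφ : LowerSemicontinuous φ := by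
    intro x c hc
    have hc' : c < Kp x (zc x) := by rw [hφ] at hc; exact hc
    filter_upwards [hlscy (zc x) x c hc'] with y hy
    exact lt_of_lt_of_le hy (hφsup y _)
  obtain ⟨y₀, hy₀⟩ := exists_min φ hSCφ hlscφ
  set z₀ : Z := zc y₀ with hz₀def
  have S2 : ∀ z, Kp y₀ z + ‖z - z₀‖^2/4 ≤ Kp y₀ z₀ := hzc y₀
  clear_value z₀
  -- saddle inequality in y
  have S1 : ∀ w, Kp y₀ z₀ ≤ Kp w z₀ := by
    intro w
    by_contra hlt
    push_neg at hlt
    -- φ y₀ = Kp y₀ z₀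
    have hφy₀ : φ y₀ = Kp y₀ z₀ := by rw [hφ, hz₀def]
    set c : ℝ := (Kp w z₀ + φ y₀)/2 with hcdef
    have hcl : Kp w z₀ < c := by rw [hcdef, hφy₀]; linarith
    have hcu : c < φ y₀ := by rw [hcdef, hφy₀]; linarith
    clear_value c
    -- upper semicontinuity of Kp w · at z₀
    have huscw : LowerSemicontinuous (fun z => -Kp w z) := hlscz w
    have hev : ∀ᶠ z in nhds z₀, Kp w z < c := by
      have hlt' : (-c : ℝ) < (fun z => -Kp w z) z₀ := by show -c < -Kp w z₀; linarith
      filter_upwards [huscw z₀ (-c) hlt'] with z hz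
      have hz' : -c < -Kp w z := hz
      linarith
    obtain ⟨δ, hδ0, hδ⟩ := Metric.eventually_nhds_iff.1 hev
    set D : ℝ := φ w - φ y₀ with hDdef
    have hD0 : 0 ≤ D := by
      have := hy₀ w
      have h0 : (0:ℝ) ≤ ‖w - y₀‖^2/4 := by positivity
      rw [hDdef]; linarith
    clear_value D
    set t : ℝ := min (1/2) (δ^2/(8*D + δ^2)) with htdef
    have ht0 : 0 < t := lt_min (by norm_num) (by positivity)
    have ht1 : t ≤ 1/2 := min_le_left _ _
    have ht2 : t ≤ δ^2/(8*D + δ^2) := min_le_right _ _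
    have ht2' : t*(8*D + δ^2) ≤ δ^2 := by
      rw [← le_div_iff₀ (by positivity)]; exact ht2
    clear_value t
    set yt : Y := (1-t)•y₀ + t•w with hytdef
    set zt : Z := zc yt with hztdef
    clear_value zt
    have m1 : φ y₀ ≤ Kp yt zt := by
      have h5 := hy₀ yt
      have h0 : (0:ℝ) ≤ ‖yt - y₀‖^2/4 := by positivity
      have h4 : φ yt = Kp yt zt := by rw [hφ, hztdef]
      linarith
    have m2 : Kp yt zt + ((1-t)*t/2)*‖y₀-w‖^2 ≤ (1-t)*Kp y₀ zt + t*Kp w zt := by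
      have := hSCy zt y₀ w (1-t) t (by linarith) ht0.le (by ring)
      simp only [] at this
      rw [hytdef]
      linarith
    have m3 : Kp y₀ zt + ‖zt - z₀‖^2/4 ≤ φ y₀ := by
      have := S2 zt
      rw [← hφy₀] at this
      exact this
    have m4 : Kp w zt ≤ φ w := hφsup w zt
    have hS0 : (0:ℝ) ≤ ‖zt - z₀‖^2 := by positivity
    have hnn : (0:ℝ) ≤ ((1-t)*t/2)*‖y₀-w‖^2 := by
      have h8 : (0:ℝ) ≤ ‖y₀-w‖^2 := by positivity
      have h9 : (0:ℝ) ≤ (1-t)*t*‖y₀-w‖^2 :=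
        mul_nonneg (mul_nonneg (by linarith) ht0.le) h8
      linarith
    have htD : t*D = t*(φ w - φ y₀) := by rw [hDdef]
    have p1 : (1-t)*(Kp y₀ zt) ≤ (1-t)*(φ y₀ - ‖zt - z₀‖^2/4) :=
      mul_le_mul_of_nonneg_left (by linarith [m3]) (by linarith)
    have p2 : t*(Kp w zt) ≤ t*(φ w) := mul_le_mul_of_nonneg_left m4 ht0.le
    have p3 : φ y₀ ≤ (1-t)*(φ y₀ - ‖zt - z₀‖^2/4) + t*(φ w) := by
      linarith [m1, m2, p1, p2, hnn]
    have p4 : (1-t)*(‖zt - z₀‖^2/4) ≤ t*D := by linarith [p3, htD]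
    have p5 : (0:ℝ) ≤ (1-2*t)*‖zt - z₀‖^2 := mul_nonneg (by linarith) hS0
    -- ‖zt - z₀‖² ≤ 8 t D
    have hZ : ‖zt - z₀‖^2 ≤ 8*t*D := by linarith [p4, p5]
    -- φ y₀ ≤ Kp w zt
    have hK : φ y₀ ≤ Kp w zt := by
      have p1' : (1-t)*(Kp y₀ zt) ≤ (1-t)*(φ y₀) :=
        mul_le_mul_of_nonneg_left (by linarith [m3, hS0]) (by linarith)
      have p6 : t*(φ y₀) ≤ t*(Kp w zt) := by linarith [m1, m2, p1', hnn]
      exact (mul_le_mul_iff_right₀ ht0).1 p6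
    -- zt is δ-close to z₀
    have hclose : dist zt z₀ < δ := by
      rw [dist_eq_norm]
      have h6 : ‖zt - z₀‖^2 < δ^2 := by
        have h7 : 0 < t*δ^2 := mul_pos ht0 (by positivity)
        linarith [hZ, ht2']
      by_contra hge
      push_neg at hge
      nlinarith [hge, hδ0, h6]
    have := hδ hclose
    linarith
  -- extract subgradient facts
  clear hφsup hSCφ hlscφ hy₀ hSCy hSCz hlscy hlscz hzc hφ
  refine ⟨y₀, z₀, ?_, ?_⟩
  · -- first component
    have hminY : ∀ w, K y₀ z₀ - ⟪as, y₀⟫_ℝ + ‖y₀ - a‖^2/2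
        ≤ K w z₀ - ⟪as, w⟫_ℝ + ‖w - a‖^2/2 := by
      intro w
      have := S1 w
      simp only [hKp] at this
      linarith
    intro w
    exact subgrad_of_min (hconv z₀) as a y₀ hminY w
  · -- second component
    have hminZ : ∀ z, (-K y₀ z₀) - ⟪bs, z₀⟫_ℝ + ‖z₀ - b‖^2/2
        ≤ (-K y₀ z) - ⟪bs, z⟫_ℝ + ‖z - b‖^2/2 := by
      intro z
      have h1 := S2 z
      have h0 : (0:ℝ) ≤ ‖z - z₀‖^2/4 := by positivity
      simp only [hKp] at h1
      linarith
    intro w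
    exact subgrad_of_min (hconc y₀).neg bs b z₀ hminZ w


/-- If `K(·,z)` is convex lower semicontinuous for every `z` and `K(y,·)` is concave
upper semicontinuous for every `y`, then the associated operator `T` on the Hilbert
space `Y × Z` is maximal monotone. -/
theorem saddleOperator_maximal_monotone
    {Y Z : Type*} [NormedAddCommGroup Y] [InnerProductSpace ℝ Y] [CompleteSpace Y]
    [NormedAddCommGroup Z] [InnerProductSpace ℝ Z] [CompleteSpace Z]
    (K : Y → Z → ℝ)
    (hconv : ∀ z : Z, ConvexOn ℝ Set.univ (fun y => K y z))
    (hlsc : ∀ z : Z, LowerSemicontinuous (fun y => K y z))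
    (hconc : ∀ y : Y, ConcaveOn ℝ Set.univ (fun z => K y z))
    (husc : ∀ y : Y, UpperSemicontinuous (fun z => K y z)) :
    IsMaximalMonotoneOperatorProd (SaddleOperator K) := by
  constructor
  · -- monotonicity
    rintro p₁ p₂ q₁ q₂ ⟨h11, h12⟩ ⟨h21, h22⟩
    have e1 := h11 p₂.1
    have e2 := h21 p₁.1
    have e3 := h12 p₂.2
    have e4 := h22 p₁.2
    simp only [inner_sub_left, inner_sub_right] at *
    linarith
  · intro B hB hTB
    funext p
    apply Set.Subset.antisymm _ (hTB p)
    intro q hq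
    obtain ⟨y₀, z₀, hmem⟩ := key_surj K hconv hlsc hconc husc p.1 p.2 q.1 q.2
    have hq0B : (q.1 - (y₀ - p.1), q.2 - (z₀ - p.2)) ∈ B (y₀, z₀) := hTB _ hmem
    have hmono := hB p (y₀, z₀) q (q.1 - (y₀ - p.1), q.2 - (z₀ - p.2)) hq hq0B
    have he1 : q.1 - (q.1 - (y₀ - p.1), q.2 - (z₀ - p.2)).1 = y₀ - p.1 := by simp
    have he2 : q.2 - (q.1 - (y₀ - p.1), q.2 - (z₀ - p.2)).2 = z₀ - p.2 := by simp
    rw [he1, he2] at hmono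
    have hi1 : ⟪y₀ - p.1, p.1 - (y₀, z₀).1⟫_ℝ = -‖y₀ - p.1‖^2 := by
      have h : p.1 - (y₀, z₀).1 = -(y₀ - p.1) := by simp
      rw [h, inner_neg_right, real_inner_self_eq_norm_sq]
    have hi2 : ⟪z₀ - p.2, p.2 - (y₀, z₀).2⟫_ℝ = -‖z₀ - p.2‖^2 := by
      have h : p.2 - (y₀, z₀).2 = -(z₀ - p.2) := by simp
      rw [h, inner_neg_right, real_inner_self_eq_norm_sq]
    rw [hi1, hi2] at hmono
    have hn1 : ‖y₀ - p.1‖^2 = 0 := by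
      nlinarith [sq_nonneg ‖y₀ - p.1‖, sq_nonneg ‖z₀ - p.2‖]
    have hn2 : ‖z₀ - p.2‖^2 = 0 := by
      nlinarith [sq_nonneg ‖y₀ - p.1‖, sq_nonneg ‖z₀ - p.2‖]
    have hy : y₀ = p.1 :=
      sub_eq_zero.1 (norm_eq_zero.1 ((pow_eq_zero_iff two_ne_zero).1 hn1))
    have hz : z₀ = p.2 :=
      sub_eq_zero.1 (norm_eq_zero.1 ((pow_eq_zero_iff two_ne_zero).1 hn2))
    rw [hy, hz] at hmem
    simpa using hmem
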